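/- Let Q = r x^2 + s xy + t y^2 be an indefinite real binary quadratic form (t ≠ 0, D = s^2 - 4rt > 0), Q'(x,y) = t x^2 - s xy + r y^2 its adjoint, and define Δ(b,c) = -Q'(b,c)^2 Δ(Q) / (3 r^2 t^2) for (b,c) ∈ R^2. Then for any g in GO^0_Q(R) acting by the twisted cubic action g ∗ v = det(g)^{-1} g^3 v, one has Δ(g ∗ (b,c)) = det(g)^2 Δ(b,c). -/

import Mathlib

open Matrix

/-- Scaling of the discriminant under the twisted cubic action: for an
indefinite real binary quadratic form `Q = r x² + s xy + t y²` (`r, t ≠ 0`,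
`Δ(Q) = s² - 4rt > 0`) with adjoint `Q'(x,y) = t x² - s xy + r y²`, set
`Δ(b,c) = -Q'(b,c)² Δ(Q) / (3 r² t²)`. If `g ∈ GO⁰_Q(ℝ)` (i.e. `det g > 0` and
`Q((x,y)g) = c_g Q(x,y)` for some `c_g > 0`), then for the twisted cubic action
`g ∗ v = det(g)⁻¹ • (g³ v)` one has `Δ(g ∗ (b,c)) = det(g)² Δ(b,c)`. -/
theorem stmt19 (r s t b c : ℝ) (hr : r ≠ 0) (ht : t ≠ 0)
    (hD : 0 < s ^ 2 - 4 * r * t)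
    (g : Matrix (Fin 2) (Fin 2) ℝ) (hdet : 0 < g.det)
    (cg : ℝ) (hcg : 0 < cg)
    (hsim : ∀ x y : ℝ,
      r * (x * g 0 0 + y * g 1 0) ^ 2
          + s * (x * g 0 0 + y * g 1 0) * (x * g 0 1 + y * g 1 1)
          + t * (x * g 0 1 + y * g 1 1) ^ 2 =
        cg * (r * x ^ 2 + s * x * y + t * y ^ 2)) :
    let Δ : (Fin 2 → ℝ) → ℝ := fun v =>
      -(t * (v 0) ^ 2 - s * (v 0) * (v 1) + r * (v 1) ^ 2) ^ 2
        * (s ^ 2 - 4 * r * t) / (3 * r ^ 2 * t ^ 2)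
    Δ ((g.det)⁻¹ • ((g ^ 3).mulVec ![b, c])) = (g.det) ^ 2 * Δ ![b, c] := by
  intro Δ
  have hc0 : cg ≠ 0 := ne_of_gt hcg
  set a := g 0 0 with ha
  set b' := g 0 1 with hb'
  set c' := g 1 0 with hc'
  set d' := g 1 1 with hd'
  have e1 : r * a ^ 2 + s * a * b' + t * b' ^ 2 = cg * r := by
    linear_combination hsim 1 0
  have e2 : r * c' ^ 2 + s * c' * d' + t * d' ^ 2 = cg * t := by
    linear_combination hsim 0 1
  have e3 : 2 * r * a * c' + s * (a * d' + b' * c') + 2 * t * b' * d' = cg * s := by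
    linear_combination hsim 1 1 - hsim 1 0 - hsim 0 1
  have hdg : g.det = a * d' - b' * c' := by
    rw [Matrix.det_fin_two]
  -- the multiplier equals the determinant
  have hkey : (cg - g.det) * (cg + g.det) * (4 * r * t - s ^ 2) = 0 := by
    rw [hdg]
    linear_combination
      (-(4 * (r * c' ^ 2 + s * c' * d' + t * d' ^ 2))) * e1
      + (-(4 * cg * r)) * e2
      + (2 * r * a * c' + s * (a * d' + b' * c') + 2 * t * b' * d' + cg * s) * e3
  have h4 : 4 * r * t - s ^ 2 ≠ 0 := by nlinarith
  have hd : cg = g.det := by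
    rcases mul_eq_zero.mp hkey with h | h
    · rcases mul_eq_zero.mp h with h | h
      · linarith
      · linarith
    · exact absurd h h4
  -- adjoint form transforms under adjugate action
  have A : ∀ x y : ℝ,
      t * (d' * x - b' * y) ^ 2 - s * (d' * x - b' * y) * (a * y - c' * x)
        + r * (a * y - c' * x) ^ 2
      = cg * (t * x ^ 2 - s * x * y + r * y ^ 2) := by
    intro x y
    linear_combination x ^ 2 * e2 + y ^ 2 * e1 - x * y * e3
  -- adjoint form transforms under the column action of g
  have QB : ∀ x y : ℝ,
      t * (a * x + b' * y) ^ 2 - s * (a * x + b' * y) * (c' * x + d' * y)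
        + r * (c' * x + d' * y) ^ 2
      = cg * (t * x ^ 2 - s * x * y + r * y ^ 2) := by
    intro x y
    have hA := A (a * x + b' * y) (c' * x + d' * y)
    have hd2 : cg = a * d' - b' * c' := hd.trans hdg
    apply mul_left_cancel₀ hc0
    linear_combination (-1) * hA
      - ((a * d' - b' * c' + cg) * (t * x ^ 2 - s * x * y + r * y ^ 2)) * hd2
  have QV : ∀ v : Fin 2 → ℝ,
      t * (g.mulVec v 0) ^ 2 - s * (g.mulVec v 0) * (g.mulVec v 1)
        + r * (g.mulVec v 1) ^ 2
      = cg * (t * (v 0) ^ 2 - s * (v 0) * (v 1) + r * (v 1) ^ 2) := by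
    intro v
    have := QB (v 0) (v 1)
    simpa [Matrix.mulVec, dotProduct, Fin.sum_univ_two, ← ha, ← hb', ← hc', ← hd'] using this
  -- unfold the cube
  have hw : (g ^ 3).mulVec ![b, c] = g.mulVec (g.mulVec (g.mulVec ![b, c])) := by
    rw [pow_succ, pow_two, ← Matrix.mulVec_mulVec, ← Matrix.mulVec_mulVec]
  set v1 := g.mulVec ![b, c] with hv1
  set v2 := g.mulVec v1 with hv2
  set v3 := g.mulVec v2 with hv3
  have q1 : t * (v1 0) ^ 2 - s * (v1 0) * (v1 1) + r * (v1 1) ^ 2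
      = cg * (t * b ^ 2 - s * b * c + r * c ^ 2) := by
    have := QV ![b, c]
    simpa [hv1] using this
  have q2 := QV v1
  have q3 := QV v2
  have hQ3 : t * (v3 0) ^ 2 - s * (v3 0) * (v3 1) + r * (v3 1) ^ 2
      = cg ^ 3 * (t * b ^ 2 - s * b * c + r * c ^ 2) := by
    rw [hv3] at *
    rw [q3, hv2, q2, q1]; ring
  show Δ ((g.det)⁻¹ • ((g ^ 3).mulVec ![b, c])) = (g.det) ^ 2 * Δ ![b, c]
  rw [hw, ← hd]
  simp only [Δ, Pi.smul_apply, smul_eq_mul, Matrix.cons_val_zero, Matrix.cons_val_one,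
    Matrix.head_cons]
  have expand : t * (cg⁻¹ * v3 0) ^ 2 - s * (cg⁻¹ * v3 0) * (cg⁻¹ * v3 1)
      + r * (cg⁻¹ * v3 1) ^ 2
      = cg⁻¹ ^ 2 * (t * (v3 0) ^ 2 - s * (v3 0) * (v3 1) + r * (v3 1) ^ 2) := by ring
  rw [expand, hQ3]
  field_simp
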